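/- Let K^{(l)} be the covariance recursion of an infinitely wide deep fully connected ReLU network: K^{(l+1)}(x,x') = σ_b² + (σ_w²/2)·σ_l(x)σ_l(x')·f(ρ_l(x,x')), where σ_l(x) = √(K^{(l)}(x,x)), ρ_l is the correlation, and f is the arc-cosine correlation mapping with f(ρ) ≥ ρ. If 0 < σ_w² < 2 and σ_b² > 0, then K^{(l)}(x,x') → q := σ_b²/(1 − σ_w²/2) for every pair (x,x'), i.e., K^{(l)} → q·𝟙_{N×N}. -/

import Mathlib

/-- The ReLU arc-cosine correlation mapping. -/
noncomputable def arcCosCorr (ρ : ℝ) : ℝ :=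
  (1 / Real.pi) * (Real.sin (Real.arccos ρ) + (Real.pi - Real.arccos ρ) * ρ)

open Real Filter

private lemma aux_mono1 : MonotoneOn (fun θ : ℝ => Real.sin θ - θ * Real.cos θ)
    (Set.Icc 0 Real.pi) := by
  have hd : ∀ θ : ℝ, HasDerivAt (fun θ : ℝ => Real.sin θ - θ * Real.cos θ)
      (θ * Real.sin θ) θ := by
    intro θ
    have h := (Real.hasDerivAt_sin θ).sub ((hasDerivAt_id θ).mul (Real.hasDerivAt_cos θ))
    exact h.congr_deriv (by simp only [id_eq]; ring)
  apply monotoneOn_of_deriv_nonneg (convex_Icc _ _)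
  · exact (Real.continuous_sin.sub (continuous_id.mul Real.continuous_cos)).continuousOn
  · intro x _; exact (hd x).differentiableAt.differentiableWithinAt
  · intro x hx
    rw [interior_Icc] at hx
    rw [(hd x).deriv]
    exact mul_nonneg hx.1.le (Real.sin_nonneg_of_nonneg_of_le_pi hx.1.le hx.2.le)

private lemma aux_anti : AntitoneOn (fun θ : ℝ => Real.sin θ + (Real.pi - θ) * Real.cos θ)
    (Set.Icc 0 Real.pi) := by
  have hd : ∀ θ : ℝ, HasDerivAt (fun θ : ℝ => Real.sin θ + (Real.pi - θ) * Real.cos θ)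
      (-((Real.pi - θ) * Real.sin θ)) θ := by
    intro θ
    have h := (Real.hasDerivAt_sin θ).add
      (((hasDerivAt_const θ Real.pi).sub (hasDerivAt_id θ)).mul (Real.hasDerivAt_cos θ))
    exact h.congr_deriv (by simp only [Pi.sub_apply, id_eq]; ring)
  apply antitoneOn_of_deriv_nonpos (convex_Icc _ _)
  · exact (Real.continuous_sin.add
      ((continuous_const.sub continuous_id).mul Real.continuous_cos)).continuousOn
  · intro x _; exact (hd x).differentiableAt.differentiableWithinAt
  · intro x hx
    rw [interior_Icc] at hx
    rw [(hd x).deriv]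
    have := mul_nonneg (by linarith [hx.2] : (0:ℝ) ≤ Real.pi - x)
      (Real.sin_nonneg_of_nonneg_of_le_pi hx.1.le hx.2.le)
    linarith

private lemma aux_sin_sub {θ : ℝ} (h0 : 0 ≤ θ) (h1 : θ ≤ Real.pi) :
    0 ≤ Real.sin θ - θ * Real.cos θ := by
  have := aux_mono1 (Set.mem_Icc.mpr ⟨le_refl 0, Real.pi_pos.le⟩)
    (Set.mem_Icc.mpr ⟨h0, h1⟩) h0
  simpa using this

private lemma aux_h_nonneg {θ : ℝ} (h0 : 0 ≤ θ) (h1 : θ ≤ Real.pi) :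
    0 ≤ Real.sin θ + (Real.pi - θ) * Real.cos θ := by
  have := aux_anti (Set.mem_Icc.mpr ⟨h0, h1⟩)
    (Set.mem_Icc.mpr ⟨Real.pi_pos.le, le_refl Real.pi⟩) h1
  simpa using this

private lemma aux_h_le_pi {θ : ℝ} (h0 : 0 ≤ θ) (h1 : θ ≤ Real.pi) :
    Real.sin θ + (Real.pi - θ) * Real.cos θ ≤ Real.pi := by
  have := aux_anti (Set.mem_Icc.mpr ⟨le_refl 0, Real.pi_pos.le⟩)
    (Set.mem_Icc.mpr ⟨h0, h1⟩) h0
  simpa using this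

private lemma arcCosCorr_of_le_neg_one {ρ : ℝ} (h : ρ ≤ -1) : arcCosCorr ρ = 0 := by
  rw [arcCosCorr, Real.arccos_eq_pi.mpr h]
  simp

private lemma arcCosCorr_nonneg {ρ : ℝ} (h : ρ ≤ 1) : 0 ≤ arcCosCorr ρ := by
  rcases le_or_gt ρ (-1) with h1 | h1
  · rw [arcCosCorr_of_le_neg_one h1]
  · have hθ0 := Real.arccos_nonneg ρ
    have hθ1 := Real.arccos_le_pi ρ
    have hcos : Real.cos (Real.arccos ρ) = ρ := Real.cos_arccos h1.le h
    rw [arcCosCorr]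
    have := aux_h_nonneg hθ0 hθ1
    rw [hcos] at this
    have hπ : (0:ℝ) < 1 / Real.pi := by positivity
    nlinarith

private lemma arcCosCorr_le_one {ρ : ℝ} (h : ρ ≤ 1) : arcCosCorr ρ ≤ 1 := by
  rcases le_or_gt ρ (-1) with h1 | h1
  · rw [arcCosCorr_of_le_neg_one h1]; norm_num
  · have hθ0 := Real.arccos_nonneg ρ
    have hθ1 := Real.arccos_le_pi ρ
    have hcos : Real.cos (Real.arccos ρ) = ρ := Real.cos_arccos h1.le h
    rw [arcCosCorr]
    have := aux_h_le_pi hθ0 hθ1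
    rw [hcos] at this
    rw [div_mul_eq_mul_div, one_mul, div_le_one Real.pi_pos]
    exact this

private lemma le_arcCosCorr (ρ : ℝ) : ρ ≤ arcCosCorr ρ := by
  rcases le_or_gt ρ (-1) with h1 | h1
  · rw [arcCosCorr_of_le_neg_one h1]; linarith
  rcases le_or_gt ρ 1 with h2 | h2
  · have hθ0 := Real.arccos_nonneg ρ
    have hθ1 := Real.arccos_le_pi ρ
    have hcos : Real.cos (Real.arccos ρ) = ρ := Real.cos_arccos h1.le h2
    rw [arcCosCorr]
    have := aux_sin_sub hθ0 hθ1
    rw [hcos] at this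
    rw [div_mul_eq_mul_div, one_mul, le_div_iff₀ Real.pi_pos]
    nlinarith [this]
  · rw [arcCosCorr, Real.arccos_eq_zero.mpr h2.le, Real.sin_zero, sub_zero, zero_add,
      div_mul_eq_mul_div, one_mul, mul_comm Real.pi ρ, mul_div_assoc,
      div_self Real.pi_ne_zero, mul_one]

private lemma arcCosCorr_one : arcCosCorr 1 = 1 :=
  le_antisymm (arcCosCorr_le_one le_rfl) (le_arcCosCorr 1)

private lemma psd_diag {N : ℕ} {A : Matrix (Fin N) (Fin N) ℝ} (hA : A.PosSemidef)
    (x : Fin N) : 0 ≤ A x x := by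
  have := hA.dotProduct_mulVec_nonneg (Pi.single x 1)
  simpa [Matrix.mulVec_single, single_dotProduct] using this

private lemma psd_cs {N : ℕ} {A : Matrix (Fin N) (Fin N) ℝ} (hA : A.PosSemidef)
    (x y : Fin N) : A x y ≤ Real.sqrt (A x x) * Real.sqrt (A y y) := by
  have hsym : A y x = A x y := by
    have := congrFun (congrFun hA.1 x) y
    simpa [Matrix.conjTranspose_apply] using this
  have hq : ∀ t : ℝ, 0 ≤ A x x * (t * t) + (2 * A x y) * t + A y y := by
    intro t
    have h := hA.dotProduct_mulVec_nonneg (t • (Pi.single x (1:ℝ) : Fin N → ℝ) + (Pi.single y (1:ℝ) : Fin N → ℝ))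
    simp only [star_trivial, Matrix.mulVec_add, Matrix.mulVec_smul, Matrix.mulVec_single,
      dotProduct_add, add_dotProduct, smul_dotProduct,
      dotProduct_smul, single_dotProduct, Pi.add_apply, Pi.smul_apply,
      smul_eq_mul, mul_one, one_mul, Matrix.col_apply, MulOpposite.op_one, one_smul] at h
    rw [hsym] at h
    nlinarith [h]
  have hd := discrim_le_zero hq
  rw [discrim] at hd
  have hxy2 : A x y ^ 2 ≤ A x x * A y y := by nlinarith
  calc A x y ≤ |A x y| := le_abs_self _
    _ = Real.sqrt (A x y ^ 2) := (Real.sqrt_sq_eq_abs _).symm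
    _ ≤ Real.sqrt (A x x * A y y) := Real.sqrt_le_sqrt hxy2
    _ = Real.sqrt (A x x) * Real.sqrt (A y y) := Real.sqrt_mul (psd_diag hA x) _

/-- for the covariance recursion of an infinitely wide deep fully
connected ReLU network,
`K^{(l+1)}(x,x') = σ_b² + (σ_w²/2) σ_l(x) σ_l(x') f(ρ_l(x,x'))`,
with `0 < σ_w² < 2` and `σ_b² > 0`, every entry converges to
`q = σ_b²/(1 - σ_w²/2)`, i.e. `K^{(l)} → q 𝟙`. -/
theorem mlp_cov_tendsto_const {N : ℕ} (σb2 σw2 : ℝ)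
    (hσw0 : 0 < σw2) (hσw : σw2 < 2) (hσb : 0 < σb2)
    (K : ℕ → Matrix (Fin N) (Fin N) ℝ) (hK0 : (K 0).PosSemidef)
    (hrec : ∀ l x x', K (l + 1) x x' =
      σb2 + (σw2 / 2) * Real.sqrt (K l x x) * Real.sqrt (K l x' x') *
        arcCosCorr (K l x x' / (Real.sqrt (K l x x) * Real.sqrt (K l x' x')))) :
    ∀ x x', Filter.Tendsto (fun l => K l x x') Filter.atTop
      (nhds (σb2 / (1 - σw2 / 2))) := by
  set c := σw2 / 2 with hcdef
  have hc0 : 0 < c := by rw [hcdef]; linarith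
  have hc1 : c < 1 := by rw [hcdef]; linarith
  set q := σb2 / (1 - c) with hqdef
  have h1c : 0 < 1 - c := by linarith
  have hq : σb2 + c * q = q := by
    rw [hqdef]; field_simp; ring
  have hq0 : 0 ≤ q := by
    rw [hqdef]; exact div_nonneg hσb.le h1c.le
  clear_value c q
  -- diagonal recursion
  have diag_rec : ∀ l x, 0 ≤ K l x x → K (l + 1) x x = σb2 + c * K l x x := by
    intro l x h
    rw [hrec]
    rcases h.eq_or_lt with h0 | h0
    · rw [← h0]; simp
    · rw [Real.mul_self_sqrt h, div_self h0.ne', arcCosCorr_one, mul_one,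
        mul_assoc, Real.mul_self_sqrt h]
  -- invariant
  have inv : ∀ l, (∀ x, 0 ≤ K l x x) ∧
      (∀ x x', K l x x' ≤ Real.sqrt (K l x x) * Real.sqrt (K l x' x')) := by
    intro l
    induction l with
    | zero => exact ⟨psd_diag hK0, psd_cs hK0⟩
    | succ l ih =>
      obtain ⟨hd, hcs⟩ := ih
      have hd' : ∀ x, 0 ≤ K (l + 1) x x := by
        intro x
        rw [diag_rec l x (hd x)]
        have := mul_nonneg hc0.le (hd x)
        linarith
      refine ⟨hd', ?_⟩
      intro x x'
      set s := Real.sqrt (K l x x) with hs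
      set s' := Real.sqrt (K l x' x') with hs'
      have hsn : 0 ≤ s := Real.sqrt_nonneg _
      have hsn' : 0 ≤ s' := Real.sqrt_nonneg _
      have hss : 0 ≤ s * s' := mul_nonneg hsn hsn'
      have hρ1 : K l x x' / (s * s') ≤ 1 := by
        rcases hss.eq_or_lt with h0 | h0
        · rw [← h0, div_zero]; exact zero_le_one
        · exact (div_le_one h0).mpr (hcs x x')
      have hf1 := arcCosCorr_le_one hρ1
      have hf0 := arcCosCorr_nonneg hρ1
      have hKxx : K l x x = s * s := (Real.mul_self_sqrt (hd x)).symm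
      have hKx'x' : K l x' x' = s' * s' := (Real.mul_self_sqrt (hd x')).symm
      rw [hrec, diag_rec l x (hd x), diag_rec l x' (hd x'), hKxx, hKx'x',
        Real.sqrt_mul_self hsn, Real.sqrt_mul_self hsn']
      have hA : 0 ≤ σb2 + c * (s * s) := by nlinarith
      have hB : 0 ≤ σb2 + c * (s' * s') := by nlinarith
      have step1 : σb2 + c * s * s' * arcCosCorr (K l x x' / (s * s'))
          ≤ σb2 + c * (s * s') := by
        nlinarith [mul_le_mul_of_nonneg_left hf1 (mul_nonneg (mul_nonneg hc0.le hsn) hsn')]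
      have step2 : σb2 + c * (s * s') ≤
          Real.sqrt (σb2 + c * (s * s)) * Real.sqrt (σb2 + c * (s' * s')) := by
        rw [← Real.sqrt_mul hA]
        refine Real.le_sqrt_of_sq_le ?_
        nlinarith [mul_nonneg (mul_nonneg hσb.le hc0.le) (sq_nonneg (s - s'))]
      linarith
  -- lower bound recursion
  have low : ∀ l x x', σb2 + c * K l x x' ≤ K (l + 1) x x' := by
    intro l x x'
    obtain ⟨hd, hcs⟩ := inv l
    rw [hrec]
    set s := Real.sqrt (K l x x) with hs
    set s' := Real.sqrt (K l x' x') with hs'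
    have hss : 0 ≤ s * s' := mul_nonneg (Real.sqrt_nonneg _) (Real.sqrt_nonneg _)
    have key : K l x x' ≤ s * s' * arcCosCorr (K l x x' / (s * s')) := by
      rcases hss.eq_or_lt with h0 | h0
      · have h1 : K l x x' ≤ 0 := by
          have := hcs x x'; rw [← h0] at this; exact this
        rw [← h0, zero_mul]
        exact h1
      · have h2 := le_arcCosCorr (K l x x' / (s * s'))
        have h3 := mul_le_mul_of_nonneg_left h2 h0.le
        rw [mul_div_cancel₀ _ h0.ne'] at h3
        exact h3
    nlinarith [mul_le_mul_of_nonneg_left key hc0.le]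
  -- diagonal convergence
  have hpow : Tendsto (fun l : ℕ => c ^ l) atTop (nhds 0) :=
    tendsto_pow_atTop_nhds_zero_of_lt_one hc0.le hc1
  have diag_eq : ∀ x l, K l x x = q + c ^ l * (K 0 x x - q) := by
    intro x l
    induction l with
    | zero => simp
    | succ l ih =>
      rw [diag_rec l x ((inv l).1 x), ih]
      linear_combination hq
  have diag_tendsto : ∀ x, Tendsto (fun l => K l x x) atTop (nhds q) := by
    intro x
    have hfun : (fun l => K l x x) = fun l => q + c ^ l * (K 0 x x - q) :=
      funext (diag_eq x)
    rw [hfun]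
    have : Tendsto (fun l : ℕ => q + c ^ l * (K 0 x x - q)) atTop
        (nhds (q + 0 * (K 0 x x - q))) :=
      tendsto_const_nhds.add (hpow.mul tendsto_const_nhds)
    simpa using this
  intro x x'
  -- lower sequence
  have hM : ∀ l, q + c ^ l * (K 0 x x' - q) ≤ K l x x' := by
    intro l
    induction l with
    | zero => simp
    | succ l ih =>
      have e : q + c ^ (l + 1) * (K 0 x x' - q)
          = σb2 + c * (q + c ^ l * (K 0 x x' - q)) := by
        linear_combination -hq
      rw [e]
      have h2 := mul_le_mul_of_nonneg_left ih hc0.le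
      have h3 := low l x x'
      linarith
  have hMt : Tendsto (fun l : ℕ => q + c ^ l * (K 0 x x' - q)) atTop (nhds q) := by
    have : Tendsto (fun l : ℕ => q + c ^ l * (K 0 x x' - q)) atTop
        (nhds (q + 0 * (K 0 x x' - q))) :=
      tendsto_const_nhds.add (hpow.mul tendsto_const_nhds)
    simpa using this
  have hU : ∀ l, K l x x' ≤ Real.sqrt (K l x x) * Real.sqrt (K l x' x') :=
    fun l => (inv l).2 x x'
  have hUt : Tendsto (fun l => Real.sqrt (K l x x) * Real.sqrt (K l x' x'))
      atTop (nhds q) := by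
    have := ((diag_tendsto x).sqrt).mul ((diag_tendsto x').sqrt)
    rwa [Real.mul_self_sqrt hq0] at this
  exact tendsto_of_tendsto_of_tendsto_of_le_of_le hMt hUt hM hU
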